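/- Let V be a vector space over a field F, let v_1,...,v_k ∈ V, and let A_1,...,A_k, B_1,...,B_k be linear endomorphisms of V such that: (i) A_i B_i A_i = A_i for all i; (ii) the A_i commute pairwise; (iii) A_i(v_j) = A_j(v_i) for all i,j; (iv) A_i B_i(v_i) = v_i for all i, and A_i B_j = B_j A_i for all i ≠ j. Then there exists v ∈ V such that A_i(v) = v_i for all i. -/

import Mathlib

/-- Lemma 1.3: a common solution for a family of commuting "pseudo-invertible"
endomorphisms. -/
theorem stmt0 (F V : Type*) [Field F] [AddCommGroup V] [Module F V]
    (k : ℕ) (v : Fin k → V) (A B : Fin k → Module.End F V)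
    (h1 : ∀ i, A i * B i * A i = A i)
    (h2 : ∀ i j, A i * A j = A j * A i)
    (h3 : ∀ i j, A i (v j) = A j (v i))
    (h4 : ∀ i, (A i) ((B i) (v i)) = v i)
    (h5 : ∀ i j, i ≠ j → A i * B j = B j * A i) :
    ∃ w : V, ∀ i, A i w = v i := by
  induction k with
  | zero => exact ⟨0, fun i => i.elim0⟩
  | succ k ih =>
    obtain ⟨w, hw⟩ := ih (fun i => v i.castSucc) (fun i => A i.castSucc) (fun i => B i.castSucc)
      (fun i => h1 _) (fun i j => h2 _ _) (fun i j => h3 _ _) (fun i => h4 _)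
      (fun i j hij => h5 _ _ (fun h => hij (Fin.castSucc_injective _ h)))
    set L := Fin.last k
    refine ⟨w + B L (v L - A L w), fun i => ?_⟩
    induction i using Fin.lastCases with
    | last =>
      have hABA : A L (B L (A L w)) = A L w := LinearMap.congr_fun (h1 L) w
      simp only [L] at hABA ⊢
      simp only [map_add, map_sub, h4, hABA]
      abel
    | cast i =>
      have hne : (i.castSucc : Fin (k + 1)) ≠ L := (Fin.castSucc_lt_last i).ne
      have hcomm : A i.castSucc (B L (v L - A L w)) = B L (A i.castSucc (v L - A L w)) :=
        LinearMap.congr_fun (h5 _ _ hne) _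
      have hAA : A i.castSucc (A L w) = A L (A i.castSucc w) :=
        LinearMap.congr_fun (h2 _ _) w
      rw [map_add, hcomm, map_sub, hAA, hw i, h3 i.castSucc L, sub_self, map_zero, add_zero]
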